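/- Let K be an algebraically closed field of characteristic p > 0. Fix q > p with p ∤ q, k := ⌈(q − p)/(p − 1)⌉, d := q + k − 1, and Λ := {n : q ≤ n ≤ d, p ∤ n}. For λ = (λ_n)_{n∈Λ} ∈ K^Λ with λ_q ≠ 0, set f_λ := x^p + Σ_{n∈Λ} λ_n x^n. If f_λ is right equivalent to f_{λ'} (with λ_q, λ'_q ≠ 0), then λ = λ'. That is, the normal forms with distinct parameters are pairwise right inequivalent. -/

import Mathlib

open PowerSeries

noncomputable def milnor (K : Type*) [Field K] (f : PowerSeries K) : ℕ :=
  Module.finrank K (PowerSeries K ⧸ Ideal.span {f.derivativeFun})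

def MilnorFinite (K : Type*) [Field K] (f : PowerSeries K) : Prop :=
  Module.Finite K (PowerSeries K ⧸ Ideal.span {f.derivativeFun})

def RightEquiv (K : Type*) [Field K] (f g : PowerSeries K) : Prop :=
  ∃ Φ : PowerSeries K ≃ₐ[K] PowerSeries K, Φ f = g


section Aux

variable {K : Type*} [Field K] {p : ℕ}

theorem coeff_pow_char [hpf : Fact p.Prime] [CharP K p] (u : PowerSeries K) (n : ℕ) :
    coeff n (u ^ p) = if p ∣ n then (coeff (n / p) u) ^ p else 0 := by
  haveI : CharP (PowerSeries K) p :=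
    charP_of_injective_algebraMap' K (A := PowerSeries K) p
  set S : PowerSeries K := ∑ i ∈ Finset.range (n + 1), C (coeff i u) * X ^ i with hS
  have hcoeffS : ∀ j, j < n + 1 → coeff j S = coeff j u := by
    intro j hj
    rw [hS, map_sum]
    rw [Finset.sum_eq_single j]
    · simp [coeff_C_mul, coeff_X_pow]
    · intro b _ hb
      simp [coeff_C_mul, coeff_X_pow, hb.symm]
    · intro hjmem
      exact absurd (Finset.mem_range.2 hj) hjmem
  have hdvd : (X : PowerSeries K) ^ (n + 1) ∣ u - S := by
    rw [X_pow_dvd_iff]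
    intro m hm
    rw [map_sub, hcoeffS m hm, sub_self]
  have hsplit : u ^ p = S ^ p + (u - S) ^ p := by
    rw [← add_pow_char, add_sub_cancel]
  have h2 : coeff n ((u - S) ^ p) = 0 := by
    have : (X : PowerSeries K) ^ (n + 1) ∣ (u - S) ^ p :=
      dvd_pow hdvd hpf.out.ne_zero
    exact (X_pow_dvd_iff.1 this) n (Nat.lt_succ_self n)
  have hSp : S ^ p = ∑ i ∈ Finset.range (n + 1), C ((coeff i u) ^ p) * X ^ (i * p) := by
    rw [hS, sum_pow_char]
    refine Finset.sum_congr rfl fun i _ => ?_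
    rw [mul_pow, ← map_pow, ← pow_mul]
  rw [hsplit, map_add, h2, add_zero, hSp, map_sum]
  by_cases hdn : p ∣ n
  · obtain ⟨c, rfl⟩ := hdn
    rw [if_pos ⟨c, rfl⟩, Nat.mul_div_cancel_left c hpf.out.pos]
    rw [Finset.sum_eq_single c]
    · rw [coeff_C_mul, coeff_X_pow, if_pos (Nat.mul_comm p c), mul_one]
    · intro b _ hb
      have hne : ¬ (p * c = b * p) := by
        intro hcon
        exact hb (Nat.eq_of_mul_eq_mul_left hpf.out.pos
          (by rw [Nat.mul_comm p b, ← hcon]))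
      rw [coeff_C_mul, coeff_X_pow, if_neg hne, mul_zero]
    · intro hcmem
      have : c ≤ p * c := Nat.le_mul_of_pos_left c hpf.out.pos
      exact absurd (Finset.mem_range.2 (by omega)) hcmem
  · rw [if_neg hdn]
    apply Finset.sum_eq_zero
    intro i _
    have hne : ¬ (n = i * p) := by
      intro hcon
      exact hdn ⟨i, by rw [hcon, Nat.mul_comm]⟩
    rw [coeff_C_mul, coeff_X_pow, if_neg hne, mul_zero]

theorem coeff_add_pow_eq (δ : PowerSeries K) {m n N : ℕ} (hm : 1 ≤ m)
    (hδ : (X : PowerSeries K) ^ m ∣ δ) (hN : N + 1 < n + m) :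
    coeff N ((X + δ) ^ n) = coeff N ((X : PowerSeries K) ^ n) := by
  rw [add_pow, Finset.sum_range_succ, map_add]
  have h1 : coeff N (∑ i ∈ Finset.range n,
      (X : PowerSeries K) ^ i * δ ^ (n - i) * (n.choose i : PowerSeries K)) = 0 := by
    rw [map_sum]
    apply Finset.sum_eq_zero
    intro i hi
    have hi' : i < n := Finset.mem_range.1 hi
    have hdvd : (X : PowerSeries K) ^ (N + 1) ∣
        (X : PowerSeries K) ^ i * δ ^ (n - i) * (n.choose i : PowerSeries K) := by
      have hle : N + 1 ≤ i + m * (n - i) := by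
        have h2 : n - i - 1 ≤ m * (n - i - 1) := Nat.le_mul_of_pos_left _ (by omega)
        have h3 : m * (n - i) = m * (n - i - 1) + m := by
          rw [← Nat.mul_succ]
          congr 1
          omega
        omega
      refine dvd_mul_of_dvd_left ?_ _
      have : (X : PowerSeries K) ^ (i + m * (n - i)) ∣
          (X : PowerSeries K) ^ i * δ ^ (n - i) := by
        rw [pow_add]
        exact mul_dvd_mul dvd_rfl (by
          rw [pow_mul]
          exact pow_dvd_pow_of_dvd hδ _)
      exact dvd_trans (pow_dvd_pow X hle) this
    exact (X_pow_dvd_iff.1 hdvd) N (Nat.lt_succ_self N)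
  rw [h1, zero_add, Nat.sub_self, pow_zero, mul_one, Nat.choose_self, Nat.cast_one, mul_one]

end Aux

theorem stmt_12 (K : Type*) [Field K] [IsAlgClosed K] (p : ℕ) (hp : p.Prime) [CharP K p]
    (q k d : ℕ) (hq : p < q) (hpq : ¬ p ∣ q)
    (hk : k = (q - p + (p - 1) - 1) / (p - 1)) (hd : d = q + k - 1)
    (lam lam' : ℕ → K) (hlq : lam q ≠ 0) (hlq' : lam' q ≠ 0)
    (h : RightEquiv K
      (X ^ p + ∑ n ∈ (Finset.Icc q d).filter (fun n => ¬ p ∣ n), C (lam n) * X ^ n)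
      (X ^ p + ∑ n ∈ (Finset.Icc q d).filter (fun n => ¬ p ∣ n), C (lam' n) * X ^ n)) :
    ∀ n ∈ (Finset.Icc q d).filter (fun n => ¬ p ∣ n), lam n = lam' n := by
  haveI : Fact p.Prime := ⟨hp⟩
  obtain ⟨Φ, hΦ⟩ := h
  set Λ := (Finset.Icc q d).filter (fun n => ¬ p ∣ n) with hΛ
  set u := Φ X with hu
  have hp2 : 2 ≤ p := hp.two_le
  have hq2 : p + 1 ≤ q := hq
  -- arithmetic facts on k
  have hkval : k = (q - 2) / (p - 1) := by rw [hk]; congr 1; omega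
  have hk1 : (p - 1) * k ≤ q - 2 := by
    rw [hkval, Nat.mul_comm]; exact Nat.div_mul_le_self _ _
  have hkpos : 1 ≤ k := by
    rw [hkval]
    rw [Nat.le_div_iff_mul_le (by omega : 0 < p - 1)]
    omega
  -- membership facts
  have hmem : ∀ n ∈ Λ, q ≤ n ∧ n ≤ d ∧ ¬ p ∣ n := by
    intro n hn
    rw [hΛ, Finset.mem_filter, Finset.mem_Icc] at hn
    exact ⟨hn.1.1, hn.1.2, hn.2⟩
  -- Φ fixes constants
  have hC : ∀ a : K, Φ (C a) = C a := by
    intro a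
    have : (C a : PowerSeries K) = algebraMap K (PowerSeries K) a := by
      rw [PowerSeries.algebraMap_apply]; simp
    rw [this, AlgEquiv.commutes]
  -- coefficient identity
  have coeffΦ : ∀ N : ℕ,
      coeff N (u ^ p) + ∑ n ∈ Λ, lam n * coeff N (u ^ n)
      = coeff N ((X : PowerSeries K) ^ p) + ∑ n ∈ Λ, lam' n * coeff N ((X : PowerSeries K) ^ n) := by
    intro N
    have h1 : Φ (X ^ p + ∑ n ∈ Λ, C (lam n) * X ^ n)
        = u ^ p + ∑ n ∈ Λ, C (lam n) * u ^ n := by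
      rw [map_add, map_pow, map_sum]
      congr 1
      refine Finset.sum_congr rfl fun n _ => ?_
      rw [map_mul, map_pow, hC]
    have h2 := hΦ
    rw [h1] at h2
    have := congrArg (coeff N) h2
    simpa [map_add, map_sum, coeff_C_mul] using this
  -- constant coefficient of u is 0
  have hu0 : constantCoeff u = 0 := by
    by_contra hcon
    have hunit : IsUnit u := by
      rw [PowerSeries.isUnit_iff_constantCoeff]
      exact isUnit_iff_ne_zero.2 hcon
    have : IsUnit (X : PowerSeries K) := by
      have h9 := hunit.map Φ.symm
      rwa [hu, AlgEquiv.symm_apply_apply] at h9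
    rw [PowerSeries.isUnit_iff_constantCoeff, constantCoeff_X] at this
    exact not_isUnit_zero this
  have hXdvdu : (X : PowerSeries K) ∣ u := X_dvd_iff.2 hu0
  -- coeff 1 u = 1
  have ha1 : coeff 1 u = 1 := by
    have hcp := coeffΦ p
    have e1 : coeff p (u ^ p) = (coeff 1 u) ^ p := by
      rw [coeff_pow_char, if_pos (dvd_refl p), Nat.div_self hp.pos]
    have e2 : ∀ n ∈ Λ, coeff p (u ^ n) = 0 := by
      intro n hn
      obtain ⟨hqn, -, -⟩ := hmem n hn
      have : (X : PowerSeries K) ^ n ∣ u ^ n := pow_dvd_pow_of_dvd hXdvdu n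
      exact (X_pow_dvd_iff.1 this) p (by omega)
    have e3 : ∀ n ∈ Λ, coeff p ((X : PowerSeries K) ^ n) = 0 := by
      intro n hn
      obtain ⟨hqn, -, -⟩ := hmem n hn
      rw [coeff_X_pow, if_neg (by omega)]
    rw [e1, Finset.sum_eq_zero (fun n hn => by rw [e2 n hn, mul_zero]),
        Finset.sum_eq_zero (fun n hn => by rw [e3 n hn, mul_zero]),
        add_zero, add_zero, coeff_X_pow, if_pos rfl] at hcp
    have : (coeff 1 u - 1) ^ p = 0 := by
      rw [sub_pow_char, hcp, one_pow, sub_self]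
    have := pow_eq_zero_iff hp.ne_zero |>.1 this
    exact sub_eq_zero.mp this
  -- low coefficients of u - X vanish
  have hcoef : ∀ i, i ≤ k → coeff i (u - X) = 0 := by
    intro i
    induction i using Nat.strong_induction_on with
    | _ i IH =>
      intro hik
      match i, IH with
      | 0, _ => simp [coeff_zero_eq_constantCoeff, map_sub, hu0]
      | 1, _ => simp [map_sub, ha1, coeff_X]
      | (j+2), IH =>
        set i := j + 2 with hi
        have hi2 : 2 ≤ i := by omega
        have hdvd : (X : PowerSeries K) ^ i ∣ u - X := by
          rw [X_pow_dvd_iff]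
          intro m hm
          exact IH m hm (by omega)
        have harith : ∀ n, q ≤ n → p * i + 1 < n + i := by
          intro n hqn
          have h5 : (p - 1) * i ≤ (p - 1) * k := Nat.mul_le_mul_left _ hik
          rw [Nat.sub_one_mul, Nat.sub_one_mul] at h5
          have hip : i ≤ p * i := Nat.le_mul_of_pos_left _ (by omega)
          have hkk : k ≤ p * k := Nat.le_mul_of_pos_left _ (by omega)
          rw [Nat.sub_one_mul] at hk1
          omega
        have hcp := coeffΦ (p * i)
        have e1 : coeff (p * i) (u ^ p) = (coeff i u) ^ p := by
          rw [coeff_pow_char, if_pos ⟨i, rfl⟩, Nat.mul_div_cancel_left i hp.pos]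
        have e0 : ∀ n, ¬ p ∣ n → coeff (p * i) ((X : PowerSeries K) ^ n) = 0 := by
          intro n hpn
          rw [coeff_X_pow, if_neg]
          intro hcon
          exact hpn ⟨i, hcon.symm⟩
        have e2 : ∀ n ∈ Λ, coeff (p * i) (u ^ n) = 0 := by
          intro n hn
          obtain ⟨hqn, -, hpn⟩ := hmem n hn
          have : u = X + (u - X) := by ring
          rw [this, coeff_add_pow_eq (u - X) (by omega) hdvd (harith n hqn)]
          exact e0 n hpn
        have e3 : coeff (p * i) ((X : PowerSeries K) ^ p) = 0 := by
          rw [coeff_X_pow, if_neg]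
          nlinarith
        rw [e1, Finset.sum_eq_zero (fun n hn => by rw [e2 n hn, mul_zero]),
            Finset.sum_eq_zero (fun n hn => by
              rw [e0 n (hmem n hn).2.2, mul_zero]),
            add_zero, add_zero, e3] at hcp
        have hiu : coeff i u = 0 := pow_eq_zero_iff hp.ne_zero |>.1 hcp
        rw [map_sub, hiu, coeff_X, if_neg (by omega), sub_zero]
  -- conclude
  have hdvdK : (X : PowerSeries K) ^ (k + 1) ∣ u - X := by
    rw [X_pow_dvd_iff]
    intro m hm
    exact hcoef m (by omega)
  intro n hn
  obtain ⟨hqn, hnd, hpn⟩ := hmem n hn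
  have hcp := coeffΦ n
  have e1 : coeff n (u ^ p) = 0 := by
    rw [coeff_pow_char, if_neg hpn]
  have e2 : ∀ j ∈ Λ, coeff n (u ^ j) = coeff n ((X : PowerSeries K) ^ j) := by
    intro j hj
    obtain ⟨hqj, -, -⟩ := hmem j hj
    have : u = X + (u - X) := by ring
    rw [this, coeff_add_pow_eq (u - X) (by omega) hdvdK (by omega)]
  have e3 : coeff n ((X : PowerSeries K) ^ p) = 0 := by
    rw [coeff_X_pow, if_neg (by omega)]
  rw [e1, e3, zero_add, zero_add,
      Finset.sum_congr rfl (fun j hj => by rw [e2 j hj])] at hcp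
  have esum : ∀ mu : ℕ → K,
      ∑ j ∈ Λ, mu j * coeff n ((X : PowerSeries K) ^ j) = mu n := by
    intro mu
    rw [Finset.sum_eq_single n]
    · rw [coeff_X_pow, if_pos rfl, mul_one]
    · intro b _ hb
      rw [coeff_X_pow, if_neg (fun hcon => hb hcon.symm), mul_zero]
    · intro hcon
      exact absurd hn hcon
  rw [esum lam, esum lam'] at hcp
  exact hcp
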